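/- Let V_0 : ℤ → ℝ, ε ∈ ℝ, and let ψ_1 : ℤ → ℝ be a nowhere-vanishing sequence satisfying −Δ²ψ_1(n) + V_0(n)ψ_1(n) = ε ψ_1(n+2) for all n ∈ ℤ. Set f_1(n) = Δψ_1(n)/ψ_1(n). Then for all n ∈ ℤ: −Δ²f_1(n) + ΔV_0(n) − 2 f_1(n) Δf_1(n+1) = −f_1(n) V_0(n+1) + f_1(n+2) V_0(n). -/

import Mathlib

lemma stmt_2_aux (a b c d V0 V1 eps : ℝ) (ha : a ≠ 0) (hb : b ≠ 0) (hc : c ≠ 0)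
    (e0 : -(c - 2*b + a) + V0*a = eps*c) (e1 : -(d - 2*c + b) + V1*b = eps*d) :
    -((d-c)/c - 2*((c-b)/b) + (b-a)/a) + (V1 - V0) - 2*((b-a)/a)*((d-c)/c - (c-b)/b)
      = -(((b-a)/a)*V1) + ((d-c)/c)*V0 := by
  field_simp
  linear_combination (b*c)*e1 - (b*d)*e0

/-- If ψ₁ is nowhere vanishing and satisfies
−Δ²ψ₁(n) + V₀(n)ψ₁(n) = ε ψ₁(n+2), then f₁(n) = Δψ₁(n)/ψ₁(n) satisfies the
second discrete Darboux condition. -/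
theorem stmt_2 (V0 : ℤ → ℝ) (ε : ℝ) (ψ1 : ℤ → ℝ)
    (hne : ∀ n : ℤ, ψ1 n ≠ 0)
    (hψ : ∀ n : ℤ, -(ψ1 (n+2) - 2 * ψ1 (n+1) + ψ1 n) + V0 n * ψ1 n = ε * ψ1 (n+2))
    (f1 : ℤ → ℝ)
    (hf : ∀ n : ℤ, f1 n = (ψ1 (n+1) - ψ1 n) / ψ1 n) :
    ∀ n : ℤ,
      -(f1 (n+2) - 2 * f1 (n+1) + f1 n) + (V0 (n+1) - V0 n)
          - 2 * f1 n * (f1 (n+2) - f1 (n+1))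
        = -(f1 n * V0 (n+1)) + f1 (n+2) * V0 n := by
  intro n
  have e0 := hψ n
  have e1 := hψ (n+1)
  have h0 := hf n
  have h1 := hf (n+1)
  have h2 := hf (n+2)
  have r1 : n + 1 + 1 = n + 2 := by ring
  have r2 : n + 2 + 1 = n + 3 := by ring
  have r3 : n + 1 + 2 = n + 3 := by ring
  rw [r1] at h1
  rw [r2] at h2
  rw [r1, r3] at e1
  rw [h0, h1, h2]
  have := stmt_2_aux (ψ1 n) (ψ1 (n+1)) (ψ1 (n+2)) (ψ1 (n+3)) (V0 n) (V0 (n+1)) ε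
    (hne n) (hne (n+1)) (hne (n+2)) (by linarith) (by linarith)
  linarith [this]
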